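/- arXiv:0809.0346 — 11 statements merged into one kernel-verified Lean document; each statement's English description precedes it below -/
import Mathlib

section
/- For every natural number n ≥ 1, l_n / l_{n+1} > π²; equivalently, l_n > π² · l_{n+1}. -/
open Real

/-- `l n = |B_{2n}| * 2^(2n) / (2n * (2n+1)!)`. -/
noncomputable def l (n : ℕ) : ℝ :=
  |((bernoulli (2 * n) : ℚ) : ℝ)| * 2 ^ (2 * n) /
    ((2 * (n : ℝ)) * (Nat.factorial (2 * n + 1) : ℝ))

noncomputable def Z (k : ℕ) : ℝ := ∑' m : ℕ, 1 / (m : ℝ) ^ (2 * k)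

lemma Z_ge_one {k : ℕ} (hk : k ≠ 0) : 1 ≤ Z k := by
  have hs := (hasSum_zeta_nat hk).summable
  have := Summable.le_tsum hs 1 (fun i _ => by positivity)
  simpa [Z] using this

lemma Z_pos {k : ℕ} (hk : k ≠ 0) : 0 < Z k := lt_of_lt_of_le one_pos (Z_ge_one hk)

lemma Z_anti {k : ℕ} (hk : k ≠ 0) : Z (k + 1) ≤ Z k := by
  refine Summable.tsum_le_tsum (fun m => ?_) (hasSum_zeta_nat (Nat.succ_ne_zero k)).summable
    (hasSum_zeta_nat hk).summable
  rcases Nat.eq_zero_or_pos m with rfl | hm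
  · simp [zero_pow, Nat.mul_ne_zero two_ne_zero hk]
  · have h1 : (1 : ℝ) ≤ (m : ℝ) := by exact_mod_cast hm
    have : (m : ℝ) ^ (2 * k) ≤ (m : ℝ) ^ (2 * (k + 1)) :=
      pow_le_pow_right₀ h1 (by omega)
    exact one_div_le_one_div_of_le (by positivity) this

lemma l_eq {k : ℕ} (hk : k ≠ 0) :
    l k = 2 * Z k / (π ^ (2 * k) * (2 * k) * (2 * k + 1)) := by
  have h := (hasSum_zeta_nat hk).tsum_eq
  have hZ : Z k = (-1 : ℝ) ^ (k + 1) * 2 ^ (2 * k - 1) * π ^ (2 * k) *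
      ((bernoulli (2 * k) : ℚ) : ℝ) / (Nat.factorial (2 * k) : ℝ) := h
  have hfac : (0 : ℝ) < (Nat.factorial (2 * k) : ℝ) := by exact_mod_cast (2 * k).factorial_pos
  have hpi : (0 : ℝ) < π ^ (2 * k) := by positivity
  have habs : |((bernoulli (2 * k) : ℚ) : ℝ)| =
      Z k * (Nat.factorial (2 * k) : ℝ) / (2 ^ (2 * k - 1) * π ^ (2 * k)) := by
    have hZnn : 0 ≤ Z k := (Z_pos hk).le
    have := congrArg abs hZ
    rw [abs_of_nonneg hZnn] at this
    rw [abs_div, abs_mul, abs_mul, abs_mul, abs_pow, abs_pow, abs_pow, abs_neg, abs_one, one_pow,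
      one_mul, abs_of_nonneg pi_pos.le, abs_of_nonneg (by norm_num : (0:ℝ) ≤ 2),
      abs_of_nonneg hfac.le] at this
    field_simp at this ⊢
    linarith [this]
  have hpow : (2 : ℝ) ^ (2 * k) = 2 * 2 ^ (2 * k - 1) := by
    rw [← pow_succ']
    congr 1
    omega
  have hfac1 : (Nat.factorial (2 * k + 1) : ℝ) = (2 * (k:ℝ) + 1) * (Nat.factorial (2 * k) : ℝ) := by
    rw [Nat.factorial_succ]; push_cast; ring
  rw [l, habs, hpow, hfac1]
  have h2 : (0:ℝ) < 2 ^ (2 * k - 1) := by positivity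
  have hkpos : (0:ℝ) < (k : ℝ) := by exact_mod_cast hk.bot_lt
  field_simp

/-- For `n ≥ 1`, `l n / l (n+1) > π²`; equivalently `l n > π² * l (n+1)`. -/
theorem stmt3 (n : ℕ) (hn : 1 ≤ n) :
    l n / l (n + 1) > Real.pi ^ 2 ∧ l n > Real.pi ^ 2 * l (n + 1) := by
  have hn0 : n ≠ 0 := by omega
  have hln := l_eq hn0
  have hln1 := l_eq (k := n + 1) (by omega)
  have hkpos : (0:ℝ) < (n : ℝ) := by exact_mod_cast hn
  have hpi : (0 : ℝ) < π ^ (2 * n) := by positivity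
  have hZn1 : (0:ℝ) < Z (n + 1) := Z_pos (Nat.succ_ne_zero n)
  have hlpos : 0 < l (n + 1) := by
    rw [hln1]
    have : (0:ℝ) < π ^ (2 * (n+1)) := by positivity
    positivity
  have key : l n > π ^ 2 * l (n + 1) := by
    rw [hln, hln1]
    have hpow : π ^ (2 * (n + 1)) = π ^ (2 * n) * π ^ 2 := by
      rw [← pow_add]; ring_nf
    rw [hpow]
    rw [mul_div_assoc', gt_iff_lt, div_lt_div_iff₀ (by positivity) (by positivity)]
    have hZle : Z (n + 1) ≤ Z n := Z_anti hn0
    push_cast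
    have h1 : Z (n+1) * (2*(n:ℝ)) * (2*(n:ℝ)+1) < Z n * (2*(n:ℝ)+2) * (2*(n:ℝ)+3) := by
      have h2 : (0:ℝ) < (2*(n:ℝ)+2) * (2*(n:ℝ)+3) := by positivity
      nlinarith [mul_lt_mul_of_pos_left
          (show (2*(n:ℝ))*(2*(n:ℝ)+1) < (2*(n:ℝ)+2)*(2*(n:ℝ)+3) by nlinarith) hZn1,
        mul_le_mul_of_nonneg_right hZle h2.le]
    have hc : (0:ℝ) < 2 * π^2 * π^(2*n) := by positivity
    nlinarith [mul_lt_mul_of_pos_left h1 hc]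
  refine ⟨?_, key⟩
  rw [gt_iff_lt, lt_div_iff₀ hlpos]
  linarith [key]
end

section
/- Let G be a conjugation-commutative group and let a, b ∈ G satisfy a·b⁻¹·a⁻²·b⁻¹·a·b² = 1. Then a and b commute. -/
/-- In a conjugation-commutative group, the relation `a b⁻¹ a⁻² b⁻¹ a b² = 1`
forces `a` and `b` to commute. -/
theorem stmt7 {G : Type*} [Group G]
    (hCC : ∀ x y : G, Commute x (y * x * y⁻¹) → Commute x y)
    (a b : G) (hrel : a * b⁻¹ * (a ^ 2)⁻¹ * b⁻¹ * a * b ^ 2 = 1) :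
    Commute a b := by
  have h2 : a * b⁻¹ * (a ^ 2)⁻¹ * b⁻¹ * a = (b ^ 2)⁻¹ :=
    mul_eq_one_iff_eq_inv.mp hrel
  have h3 : b ^ 2 = (a * b⁻¹ * (a ^ 2)⁻¹ * b⁻¹ * a)⁻¹ := by rw [h2, inv_inv]
  have h4 : a * b ^ 2 * a = b * a ^ 2 * b := by rw [h3]; group
  have key : Commute (a * b) (b * (a * b) * b⁻¹) := by
    show (a * b) * (b * (a * b) * b⁻¹) = (b * (a * b) * b⁻¹) * (a * b)
    have e1 : (a * b) * (b * (a * b) * b⁻¹) = a * b ^ 2 * a := by rw [pow_two]; group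
    have e2 : (b * (a * b) * b⁻¹) * (a * b) = b * a ^ 2 * b := by rw [pow_two]; group
    rw [e1, e2, h4]
  have h5 : a * b * b = b * (a * b) := hCC (a * b) b key
  have h6 : a * b * b = b * a * b := by rw [h5, mul_assoc]
  exact mul_right_cancel h6
end

section
/- Let G be a power-commutative group and let a, b ∈ G satisfy a·b⁻³·a·b²·a²·b² = 1. Then a and b commute. -/
/-- In a power-commutative group, the relation `a b⁻³ a b² a² b² = 1`
forces `a` and `b` to commute. -/
theorem stmt8 {G : Type*} [Group G]
    (hPC : ∀ x y : G, ∀ p q : ℤ, p ≠ 0 → q ≠ 0 → Commute (x ^ p) (y ^ q) → Commute x y)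
    (a b : G) (hrel : a * (b ^ 3)⁻¹ * a * b ^ 2 * a ^ 2 * b ^ 2 = 1) :
    Commute a b := by
  set u := a * b ^ 2 with hu
  have h0 : u ^ 2 * (b ^ 2)⁻¹ * u ^ 2 = b ^ 5 := by
    have h : (b ^ 5)⁻¹ * (u ^ 2 * (b ^ 2)⁻¹ * u ^ 2)
        = u⁻¹ * (a * (b ^ 3)⁻¹ * a * b ^ 2 * a ^ 2 * b ^ 2) * u := by
      rw [hu]; group; simp [pow_succ, mul_assoc, zpow_neg, zpow_ofNat]
    rw [hrel] at h
    have h1 : (b ^ 5)⁻¹ * (u ^ 2 * (b ^ 2)⁻¹ * u ^ 2) = 1 := by rw [h]; group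
    exact (inv_mul_eq_one.mp h1).symm
  have hcomm : u ^ 2 * b ^ 3 = b ^ 3 * u ^ 2 := by
    calc u ^ 2 * b ^ 3 = u ^ 2 * (b ^ 2)⁻¹ * b ^ 5 := by group
      _ = u ^ 2 * (b ^ 2)⁻¹ * (u ^ 2 * (b ^ 2)⁻¹ * u ^ 2) := by rw [h0]
      _ = (u ^ 2 * (b ^ 2)⁻¹ * u ^ 2) * ((b ^ 2)⁻¹ * u ^ 2) := by group
      _ = b ^ 5 * ((b ^ 2)⁻¹ * u ^ 2) := by rw [h0]
      _ = b ^ 3 * u ^ 2 := by group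
  have hub : Commute u b := by
    refine hPC u b 2 3 (by norm_num) (by norm_num) ?_
    show u ^ (2 : ℤ) * b ^ (3 : ℤ) = b ^ (3 : ℤ) * u ^ (2 : ℤ)
    rw [show (2:ℤ) = ((2:ℕ):ℤ) from rfl, show (3:ℤ) = ((3:ℕ):ℤ) from rfl,
      zpow_natCast, zpow_natCast]
    exact hcomm
  have hb2 : Commute ((b ^ 2)⁻¹) b := ((Commute.refl b).pow_left 2).inv_left
  have : Commute (u * (b ^ 2)⁻¹) b := hub.mul_left hb2
  simpa [hu, mul_assoc] using this
end

section
/- Let G be a power-commutative group and let a, b ∈ G satisfy a·b²·a·b⁻¹·a·b²·a²·b²·a·b⁻¹ = 1. Then a and b commute. -/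
/-- In a power-commutative group, the relation `a b² a b⁻¹ a b² a² b² a b⁻¹ = 1`
forces `a` and `b` to commute. -/
theorem stmt9 {G : Type*} [Group G]
    (hPC : ∀ x y : G, ∀ p q : ℤ, p ≠ 0 → q ≠ 0 → Commute (x ^ p) (y ^ q) → Commute x y)
    (a b : G) (hrel : a * b ^ 2 * a * b⁻¹ * a * b ^ 2 * a ^ 2 * b ^ 2 * a * b⁻¹ = 1) :
    Commute a b := by
  set y : G := a * b ^ 2 * a * b⁻¹ with hy
  have h1 : y ^ 2 * b * y = 1 := by
    calc y ^ 2 * b * y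
        = a * b ^ 2 * a * b⁻¹ * a * b ^ 2 * a ^ 2 * b ^ 2 * a * b⁻¹ := by rw [hy]; simp only [pow_two]; group
      _ = 1 := hrel
  have hb : b = y⁻¹ ^ 3 := by
    have h := h1
    rw [show (1 : G) = y ^ 2 * y⁻¹ ^ 3 * y from by group] at h
    exact mul_left_cancel (mul_right_cancel h)
  have h2 : a * y⁻¹ ^ 6 * a = y⁻¹ ^ 2 := by
    have hx : a * b ^ 2 * a = y * b := by rw [hy]; simp only [pow_two]; group
    rw [hb] at hx
    calc a * y⁻¹ ^ 6 * a = a * (y⁻¹ ^ 3) ^ 2 * a := by simp only [pow_two]; group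
      _ = y * y⁻¹ ^ 3 := hx
      _ = y⁻¹ ^ 2 := by simp only [pow_two]; group
  have hd : (a * y⁻¹ ^ 6) ^ 2 = y⁻¹ ^ 8 := by
    calc (a * y⁻¹ ^ 6) ^ 2 = (a * y⁻¹ ^ 6 * a) * y⁻¹ ^ 6 := by simp only [pow_two]; group
      _ = y⁻¹ ^ 2 * y⁻¹ ^ 6 := by rw [h2]
      _ = y⁻¹ ^ 8 := by simp only [pow_two]; group
  have hcom : Commute (a * y⁻¹ ^ 6) y⁻¹ := by
    refine hPC _ _ 2 1 two_ne_zero one_ne_zero ?_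
    rw [zpow_one, show ((a * y⁻¹ ^ 6) ^ (2 : ℤ)) = (a * y⁻¹ ^ 6) ^ (2 : ℕ) from zpow_natCast _ 2,
      hd]
    exact (Commute.refl y⁻¹).pow_left 8
  have hca : Commute a y⁻¹ := by
    have ha : a = (a * y⁻¹ ^ 6) * (y⁻¹ ^ 6)⁻¹ := by group
    rw [ha]
    exact hcom.mul_left ((Commute.refl y⁻¹).pow_left 6).inv_left
  rw [hb]
  exact hca.pow_right 3
end

section
/- Let G be a power-commutative group and let a, b ∈ G satisfy a³·b²·a³·b·a⁻²·b = 1. Then a and b commute. -/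
/-- In a power-commutative group, the relation `a³ b² a³ b a⁻² b = 1`
forces `a` and `b` to commute. -/
theorem stmt10 {G : Type*} [Group G]
    (hPC : ∀ x y : G, ∀ p q : ℤ, p ≠ 0 → q ≠ 0 → Commute (x ^ p) (y ^ q) → Commute x y)
    (a b : G) (hrel : a ^ 3 * b ^ 2 * a ^ 3 * b * (a ^ 2)⁻¹ * b = 1) :
    Commute a b := by
  -- Step 1: rewrite the relation as a³ b² a³ = b⁻¹ a² b⁻¹
  have key : a ^ 3 * b ^ 2 * a ^ 3 = b⁻¹ * a ^ 2 * b⁻¹ := by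
    rw [← mul_inv_eq_one]
    simpa [mul_inv_rev, mul_assoc] using hrel
  -- Step 2: (b a³ b)² = a²
  have hx2 : (b * a ^ 3 * b) ^ 2 = a ^ 2 := by
    calc (b * a ^ 3 * b) ^ 2 = b * (a ^ 3 * b ^ 2 * a ^ 3) * b := by simp only [pow_succ, pow_zero, one_mul, mul_assoc]
      _ = b * (b⁻¹ * a ^ 2 * b⁻¹) * b := by rw [key]
      _ = a ^ 2 := by group
  -- Step 3: b a³ b commutes with a (by PC, since (b a³ b)² = a² commutes with a)
  have hxa : Commute (b * a ^ 3 * b) a := by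
    refine hPC _ _ 2 1 (by norm_num) one_ne_zero ?_
    have : ((b * a ^ 3 * b) ^ (2:ℤ)) = a ^ 2 := by
      rw [show ((2:ℤ)) = ((2:ℕ):ℤ) from rfl, zpow_natCast, hx2]
    rw [this, zpow_one]
    exact (Commute.refl a).pow_left 2
  have h3 : Commute (b * a ^ 3 * b) (a ^ 3) := hxa.pow_right 3
  have h3' : (b * a ^ 3 * b) * a ^ 3 = a ^ 3 * (b * a ^ 3 * b) := h3
  -- Step 4: b commutes with (b a³)²
  have hbu : Commute b ((b * a ^ 3) ^ 2) := by
    show b * (b * a ^ 3) ^ 2 = (b * a ^ 3) ^ 2 * b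
    calc b * (b * a ^ 3) ^ 2 = b * ((b * a ^ 3 * b) * a ^ 3) := by simp only [pow_succ, pow_zero, one_mul, mul_assoc]
      _ = b * (a ^ 3 * (b * a ^ 3 * b)) := by rw [h3']
      _ = (b * a ^ 3) ^ 2 * b := by simp only [pow_succ, pow_zero, one_mul, mul_assoc]
  -- Step 5: by PC, b commutes with b a³, hence with a³
  have hbu1 : Commute b (b * a ^ 3) := by
    refine hPC _ _ 1 2 one_ne_zero (by norm_num) ?_
    have : ((b * a ^ 3) ^ (2:ℤ)) = (b * a ^ 3) ^ 2 := by
      rw [show ((2:ℤ)) = ((2:ℕ):ℤ) from rfl, zpow_natCast]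
    rw [zpow_one, this]
    exact hbu
  have hba3 : Commute b (a ^ 3) := by
    have h := ((Commute.refl b).inv_right).mul_right hbu1
    simpa [mul_assoc] using h
  -- Step 6: by PC, b commutes with a
  have : Commute b a := by
    refine hPC _ _ 1 3 one_ne_zero (by norm_num) ?_
    have : (a ^ (3:ℤ)) = a ^ 3 := by
      rw [show ((3:ℤ)) = ((3:ℕ):ℤ) from rfl, zpow_natCast]
    rw [zpow_one, this]
    exact hba3
  exact this.symm
end

section
/- Let G be a power-commutative and commutative-transitive group, and let a, b, c ∈ G with c ≠ 1 satisfy a²·c·b⁻¹·c·b = 1 and b²·c² = 1. Then a, b, and c pairwise commute. -/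
/-- In a power-commutative, commutative-transitive group, the relations
`a² c b⁻¹ c b = 1` and `b² c² = 1`, with `c ≠ 1`, force `a`, `b`, `c` to
pairwise commute. -/
theorem stmt11 {G : Type*} [Group G]
    (hPC : ∀ x y : G, ∀ p q : ℤ, p ≠ 0 → q ≠ 0 → Commute (x ^ p) (y ^ q) → Commute x y)
    (hCT : ∀ x y z : G, z ≠ 1 → Commute x z → Commute y z → Commute x y)
    (a b c : G) (hc : c ≠ 1)
    (hrel1 : a ^ 2 * c * b⁻¹ * c * b = 1) (hrel2 : b ^ 2 * c ^ 2 = 1) :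
    Commute a b ∧ Commute a c ∧ Commute b c := by
  have hb2 : b ^ 2 = (c ^ 2)⁻¹ := by
    rw [eq_inv_iff_mul_eq_one]; exact hrel2
  have hbc : Commute b c := by
    apply hPC b c 2 2 two_ne_zero two_ne_zero
    have : Commute (b ^ 2) (c ^ 2) := by
      rw [hb2]; exact (Commute.refl (c ^ 2)).inv_left
    simpa [zpow_two, sq] using this
  have hconj : b⁻¹ * c * b = c := by
    have h := hbc.inv_left.eq
    rw [h]; group
  have ha2 : a ^ 2 = (c ^ 2)⁻¹ := by
    rw [eq_inv_iff_mul_eq_one]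
    calc a ^ 2 * c ^ 2 = a ^ 2 * c * (b⁻¹ * c * b) := by rw [hconj]; rw [sq c]; group
    _ = a ^ 2 * c * b⁻¹ * c * b := by group
    _ = 1 := hrel1
  have hac : Commute a c := by
    apply hPC a c 2 2 two_ne_zero two_ne_zero
    have : Commute (a ^ 2) (c ^ 2) := by
      rw [ha2]; exact (Commute.refl (c ^ 2)).inv_left
    simpa [zpow_two, sq] using this
  have hab : Commute a b := by
    apply hPC a b 2 2 two_ne_zero two_ne_zero
    have : Commute (a ^ 2) (b ^ 2) := by rw [ha2, hb2]
    simpa [zpow_two, sq] using this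
  exact ⟨hab, hac, hbc⟩
end

section
/- Let G be a power-commutative group and let a, b ∈ G satisfy a²·b²·a²·b²·a³·b²·a²·b²·a²·b²·a·b⁻¹·a·b² = 1. Then a and b commute. -/
/-- In a power-commutative group, the relation
`a² b² a² b² a³ b² a² b² a² b² a b⁻¹ a b² = 1` forces `a` and `b` to commute. -/
theorem stmt13 {G : Type*} [Group G]
    (hPC : ∀ x y : G, ∀ p q : ℤ, p ≠ 0 → q ≠ 0 → Commute (x ^ p) (y ^ q) → Commute x y)
    (a b : G)
    (hrel : a ^ 2 * b ^ 2 * a ^ 2 * b ^ 2 * a ^ 3 * b ^ 2 * a ^ 2 * b ^ 2 * a ^ 2 * b ^ 2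
      * a * b⁻¹ * a * b ^ 2 = 1) :
    Commute a b := by
  set x : G := a * b ^ 2 * a with hx
  -- The relation is equivalent to `b = x^3 * a * x^3`.
  have hb : b = x ^ 3 * a * x ^ 3 := by
    have key : (a * b ^ 2 * a) ^ 3 * a * (a * b ^ 2 * a) ^ 3 =
        (a * b ^ 2) * (a ^ 2 * b ^ 2 * a ^ 2 * b ^ 2 * a ^ 3 * b ^ 2 * a ^ 2 * b ^ 2 * a ^ 2
          * b ^ 2 * a * b⁻¹ * a * b ^ 2) * (a * b ^ 2)⁻¹ * b := by
      simp [pow_succ, mul_assoc]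
    rw [hrel] at key
    rw [hx, key]
    group
  set z : G := b * (x ^ 3)⁻¹ * b with hz
  -- `z = x^3 * (a*b)` and `z = (b*a) * x^3`.
  have hz1 : z = x ^ 3 * (a * b) := by
    rw [hz]
    nth_rewrite 1 [hb]
    group
  have hz2 : z = (b * a) * x ^ 3 := by
    rw [hz]
    nth_rewrite 2 [hb]
    group
  -- hence `x^7 = z^2`.
  have hx7 : x ^ 7 = z ^ 2 := by
    have : z ^ 2 = z * z := sq z
    rw [this]
    nth_rewrite 1 [hz1]
    nth_rewrite 1 [hz2]
    rw [hx]
    simp [pow_succ, mul_assoc]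
  -- PC gives `Commute x z`.
  have hxz : Commute x z := by
    apply hPC x z 7 2 (by norm_num) (by norm_num)
    have h7 : x ^ (7 : ℤ) = x ^ (7 : ℕ) := by norm_cast
    have h2 : z ^ (2 : ℤ) = z ^ (2 : ℕ) := by norm_cast
    rw [h7, h2, hx7]
  -- `(b * x⁻³)^2 = z * x⁻³` commutes with `x`, so PC gives `Commute (b * x⁻³) x`.
  have hu : (b * (x ^ 3)⁻¹) ^ 2 = z * (x ^ 3)⁻¹ := by
    rw [hz]; simp [pow_two, mul_assoc]
  have hx3 : Commute (x ^ 3) x := (Commute.refl x).pow_left 3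
  have h5 : Commute (z * (x ^ 3)⁻¹) x := Commute.mul_left hxz.symm hx3.inv_left
  have h6 : Commute ((b * (x ^ 3)⁻¹) ^ 2) x := by rw [hu]; exact h5
  have hux : Commute (b * (x ^ 3)⁻¹) x := by
    apply hPC (b * (x ^ 3)⁻¹) x 2 1 (by norm_num) (by norm_num)
    have h2 : (b * (x ^ 3)⁻¹) ^ (2 : ℤ) = (b * (x ^ 3)⁻¹) ^ (2 : ℕ) := by
      norm_cast
    rw [h2, zpow_one]
    exact h6
  -- hence `b` commutes with `x`.
  have hbx : Commute b x := by
    have hb' : b = (b * (x ^ 3)⁻¹) * x ^ 3 := by group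
    rw [hb']
    exact Commute.mul_left hux hx3
  -- finally `a = x⁻³ * b * x⁻³` commutes with `b`.
  have ha : a = (x ^ 3)⁻¹ * b * (x ^ 3)⁻¹ := by
    rw [hb]; group
  have c1 : Commute ((x ^ 3)⁻¹) b := (hbx.symm.pow_left 3).inv_left
  have : Commute ((x ^ 3)⁻¹ * b * (x ^ 3)⁻¹) b :=
    Commute.mul_left (Commute.mul_left c1 (Commute.refl b)) c1
  rw [ha]
  exact this
end

section
/- Let G be a power-commutative group and let a, b ∈ G satisfy a²·b·a²·b⁻²·a²·b = 1. Then a and b commute. -/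
/-- In a power-commutative group, the relation `a² b a² b⁻² a² b = 1`
forces `a` and `b` to commute. -/
theorem stmt14 {G : Type*} [Group G]
    (hPC : ∀ x y : G, ∀ p q : ℤ, p ≠ 0 → q ≠ 0 → Commute (x ^ p) (y ^ q) → Commute x y)
    (a b : G) (hrel : a ^ 2 * b * a ^ 2 * (b ^ 2)⁻¹ * a ^ 2 * b = 1) :
    Commute a b := by
  set x := a ^ 2 with hx
  have h1 : b⁻¹ * x * b = b * x⁻¹ * b⁻¹ * x⁻¹ := by
    have e : b⁻¹ * x * b
        = b⁻¹ * (x * b) * (x * b * x * (b ^ 2)⁻¹ * x * b) * (b⁻¹ * x⁻¹ * b)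
          * (b * x⁻¹ * b⁻¹ * x⁻¹) := by group
    rw [hrel] at e
    rw [e]; group
  have h2 : b⁻¹ * x⁻¹ * b = x * b * x * b⁻¹ := by
    rw [show b⁻¹ * x⁻¹ * b = (b⁻¹ * x * b)⁻¹ from by group, h1]; group
  have h3 : b⁻¹ * b⁻¹ * x * b * b = b * x * b⁻¹ := by
    calc b⁻¹ * b⁻¹ * x * b * b = b⁻¹ * (b⁻¹ * x * b) * b := by group
      _ = b⁻¹ * (b * x⁻¹ * b⁻¹ * x⁻¹) * b := by rw [h1]
      _ = x⁻¹ * (b⁻¹ * x⁻¹ * b) := by group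
      _ = x⁻¹ * (x * b * x * b⁻¹) := by rw [h2]
      _ = b * x * b⁻¹ := by group
  have h4 : b⁻¹ * (b⁻¹ * b⁻¹ * x * b * b) * b = x := by rw [h3]; group
  have key : x * b ^ 3 = b ^ 3 * x := by
    conv_rhs => rw [← h4]
    rw [pow_succ, pow_two]
    group
  have hc : Commute (a ^ (2 : ℤ)) (b ^ (3 : ℤ)) := by
    have e2 : (a : G) ^ (2 : ℤ) = x := by rw [hx]; norm_cast
    have e3 : (b : G) ^ (3 : ℤ) = b ^ 3 := by norm_cast
    rw [Commute, SemiconjBy, e2, e3]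
    exact key
  exact hPC a b 2 3 (by norm_num) (by norm_num) hc
end

section
/- Let G be a power-commutative group and let a, b ∈ G satisfy a·b⁻³·a·b⁴·a²·b⁴ = 1. Then a and b commute. -/
/-- In a power-commutative group, the relation `a b⁻³ a b⁴ a² b⁴ = 1`
forces `a` and `b` to commute. -/
theorem stmt15 {G : Type*} [Group G]
    (hPC : ∀ x y : G, ∀ p q : ℤ, p ≠ 0 → q ≠ 0 → Commute (x ^ p) (y ^ q) → Commute x y)
    (a b : G) (hrel : a * (b ^ 3)⁻¹ * a * b ^ 4 * a ^ 2 * b ^ 4 = 1) :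
    Commute a b := by
  -- Let u = a * b^4.  The relation is equivalent to  b⁻⁴ u² = u⁻² b⁷.
  have h2 : (b ^ 4)⁻¹ * (a * b ^ 4) ^ 2 = ((a * b ^ 4) ^ 2)⁻¹ * b ^ 7 := by
    rw [← mul_inv_eq_one]
    calc (b ^ 4)⁻¹ * (a * b ^ 4) ^ 2 * (((a * b ^ 4) ^ 2)⁻¹ * b ^ 7)⁻¹
        = ((b ^ 4)⁻¹ * (a * b ^ 4)) * (a * (b ^ 3)⁻¹ * a * b ^ 4 * a ^ 2 * b ^ 4) *
          ((b ^ 4)⁻¹ * (a * b ^ 4))⁻¹ := by simp only [pow_two]; group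
      _ = 1 := by rw [hrel]; group
  -- Let w = b⁻⁴ u².  Then w² = b³.
  have hw2 : ((b ^ 4)⁻¹ * (a * b ^ 4) ^ 2) ^ 2 = b ^ 3 := by
    rw [sq]
    nth_rewrite 2 [h2]
    group
  -- w commutes with b
  have c1 : Commute ((b ^ 4)⁻¹ * (a * b ^ 4) ^ 2) b := by
    refine hPC _ b 2 1 two_ne_zero one_ne_zero ?_
    have e1 : ((b ^ 4)⁻¹ * (a * b ^ 4) ^ 2) ^ (2 : ℤ) = b ^ 3 := by
      rw [show (2 : ℤ) = ((2 : ℕ) : ℤ) from rfl, zpow_natCast, hw2]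
    rw [e1, zpow_one]
    exact (Commute.refl b).pow_left 3
  -- u² = b⁴ * w commutes with b
  have c2 : Commute ((a * b ^ 4) ^ 2) b := by
    have e2 : (a * b ^ 4) ^ 2 = b ^ 4 * ((b ^ 4)⁻¹ * (a * b ^ 4) ^ 2) := by group
    rw [e2]
    exact ((Commute.refl b).pow_left 4).mul_left c1
  -- so u commutes with b
  have c3 : Commute (a * b ^ 4) b := by
    refine hPC _ b 2 1 two_ne_zero one_ne_zero ?_
    rw [show (2 : ℤ) = ((2 : ℕ) : ℤ) from rfl, zpow_natCast, zpow_one]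
    exact c2
  -- hence a = u * b⁻⁴ commutes with b
  have : Commute ((a * b ^ 4) * (b ^ 4)⁻¹) b :=
    c3.mul_left ((Commute.refl b).pow_left 4).inv_left
  simpa using this
end

section
/- Let G be a conjugation-commutative group and let a, b ∈ G satisfy both a·b³·a·b·a⁻²·b = 1 and a·b·a⁻¹·b·a·b⁻¹·a⁻¹·b⁻¹ = 1. Then a and b commute. -/
/-- In a conjugation-commutative group, the relations `a b³ a b a⁻² b = 1` and
`a b a⁻¹ b a b⁻¹ a⁻¹ b⁻¹ = 1` force `a` and `b` to commute. -/
theorem stmt17 {G : Type*} [Group G]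
    (hCC : ∀ x y : G, Commute x (y * x * y⁻¹) → Commute x y)
    (a b : G)
    (hrel1 : a * b ^ 3 * a * b * (a ^ 2)⁻¹ * b = 1)
    (hrel2 : a * b * a⁻¹ * b * a * b⁻¹ * a⁻¹ * b⁻¹ = 1) :
    Commute a b := by
  refine (hCC b a ?_).symm
  show b * (a * b * a⁻¹) = (a * b * a⁻¹) * b
  calc b * (a * b * a⁻¹)
      = (a * b * a⁻¹ * b * a * b⁻¹ * a⁻¹ * b⁻¹)⁻¹ * (a * b * a⁻¹ * b) := by group
    _ = (a * b * a⁻¹) * b := by rw [hrel2]; group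
end

section
/- Let G be a power-commutative and conjugation-commutative group, and let a, b ∈ G satisfy both a²·b²·a⁻¹·b⁻¹·a⁻¹·b² = 1 and a·b²·a⁻¹·b·a⁻¹·b²·a·b⁻² = 1. Then a and b commute. -/
/-- In a power-commutative, conjugation-commutative group, the relations
`a² b² a⁻¹ b⁻¹ a⁻¹ b² = 1` and `a b² a⁻¹ b a⁻¹ b² a b⁻² = 1` force `a` and `b`
to commute. -/
theorem stmt18 {G : Type*} [Group G]
    (hPC : ∀ x y : G, ∀ p q : ℤ, p ≠ 0 → q ≠ 0 → Commute (x ^ p) (y ^ q) → Commute x y)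
    (hCC : ∀ x y : G, Commute x (y * x * y⁻¹) → Commute x y)
    (a b : G)
    (hrel1 : a ^ 2 * b ^ 2 * a⁻¹ * b⁻¹ * a⁻¹ * b ^ 2 = 1)
    (hrel2 : a * b ^ 2 * a⁻¹ * b * a⁻¹ * b ^ 2 * a * (b ^ 2)⁻¹ = 1) :
    Commute a b := by
  have e1 : a * b * a = b ^ 2 * a ^ 2 * b ^ 2 := by
    rw [← mul_inv_eq_one]
    calc a * b * a * (b ^ 2 * a ^ 2 * b ^ 2)⁻¹
        = b ^ 2 * (a ^ 2 * b ^ 2 * a⁻¹ * b⁻¹ * a⁻¹ * b ^ 2)⁻¹ * (b ^ 2)⁻¹ := by group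
      _ = 1 := by rw [hrel1]; group
  have e2 : a * b ^ 2 * a⁻¹ * b * a⁻¹ * b ^ 2 * a = b ^ 2 := by
    rw [← mul_inv_eq_one]
    exact hrel2
  have key : b ^ 2 * (a * b ^ 2 * a⁻¹) = (a * b ^ 2 * a⁻¹) * b ^ 2 := by
    have h6 : (a * b ^ 2 * a⁻¹ * b * a⁻¹ * b ^ 2 * a) * (a * b ^ 2 * a⁻¹)
        = b ^ 2 * (a * b ^ 2 * a⁻¹) := by rw [e2]
    rw [← h6]
    calc a * b ^ 2 * a⁻¹ * b * a⁻¹ * b ^ 2 * a * (a * b ^ 2 * a⁻¹)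
        = a * b ^ 2 * a⁻¹ * b * a⁻¹ * (b ^ 2 * a ^ 2 * b ^ 2) * a⁻¹ := by group; simp [zpow_two, pow_two, mul_assoc]
      _ = a * b ^ 2 * a⁻¹ * b * a⁻¹ * (a * b * a) * a⁻¹ := by rw [← e1]
      _ = (a * b ^ 2 * a⁻¹) * b ^ 2 := by group; simp [zpow_two, pow_two, mul_assoc]
  have hc : Commute (b ^ 2) (a * b ^ 2 * a⁻¹) := key
  have hba : Commute (b ^ 2) a := hCC (b ^ 2) a hc
  have h2 : Commute (a ^ (1 : ℤ)) (b ^ (2 : ℤ)) := by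
    have := hba.symm
    rw [show (2:ℤ) = ((2:ℕ):ℤ) from rfl, zpow_natCast, zpow_one]; exact this
  exact hPC a b 1 2 one_ne_zero two_ne_zero h2
end
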